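/- Let ρ > 0 and let w ∈ ℝ^{ℕ^n_{2k}} be a truncated moment sequence with M_k(w) ⪰ 0 and L^{(k)}_b(w) ⪰ 0 where b = ρ² − ‖x‖². Then for each t = 0, 1, ..., k, the Riesz functional satisfies L_w(‖x‖^{2t}) ≤ ρ^{2t} w_0, and consequently ‖w|_{2t}‖_2 ≤ Tr(M_t(w)) ≤ (1 + ρ² + ··· + ρ^{2t}) w_0. -/

import Mathlib

open MeasureTheory MvPolynomial

/-- The Riesz functional of a (truncated) multisequence `w`, applied to a
polynomial `q`: `L_w(q) = ∑_α q_α w_α`. -/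
noncomputable def riesz {n : ℕ} (w : (Fin n →₀ ℕ) → ℝ)
    (q : MvPolynomial (Fin n) ℝ) : ℝ :=
  ∑ α ∈ q.support, coeff α q * w α

/-- The finite set of exponents `α ∈ ℕ^n` with `|α| ≤ t`. -/
noncomputable def degLE (n t : ℕ) : Finset (Fin n →₀ ℕ) :=
  ((Fintype.piFinset fun _ : Fin n => Finset.range (t + 1)).filter
    (fun f => ∑ j, f j ≤ t)).image (fun f => Finsupp.equivFunOnFinite.symm f)

section aux
set_option linter.unusedSectionVars false


variable {n : ℕ} (w : (Fin n →₀ ℕ) → ℝ)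

lemma riesz_eq_sum_of_subset {q : MvPolynomial (Fin n) ℝ} {s : Finset (Fin n →₀ ℕ)}
    (h : q.support ⊆ s) : riesz w q = ∑ α ∈ s, coeff α q * w α := by
  refine Finset.sum_subset h fun α _ hα => ?_
  rw [notMem_support_iff.mp hα, zero_mul]

lemma riesz_zero : riesz w 0 = 0 := by simp [riesz]

lemma riesz_add (p q : MvPolynomial (Fin n) ℝ) :
    riesz w (p + q) = riesz w p + riesz w q := by
  rw [riesz_eq_sum_of_subset w (s := p.support ∪ q.support) support_add,
    riesz_eq_sum_of_subset w (s := p.support ∪ q.support) Finset.subset_union_left,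
    riesz_eq_sum_of_subset w (s := p.support ∪ q.support) Finset.subset_union_right,
    ← Finset.sum_add_distrib]
  simp [coeff_add, add_mul]

lemma riesz_smul (c : ℝ) (q : MvPolynomial (Fin n) ℝ) :
    riesz w (c • q) = c * riesz w q := by
  rw [riesz_eq_sum_of_subset w (s := q.support) support_smul, riesz, Finset.mul_sum]
  simp [mul_assoc]

lemma riesz_monomial (α : Fin n →₀ ℕ) (c : ℝ) :
    riesz w (monomial α c) = c * w α := by
  rw [riesz_eq_sum_of_subset w (s := {α}) (support_monomial_subset)]
  simp

lemma riesz_sum {ι : Type*} (s : Finset ι) (f : ι → MvPolynomial (Fin n) ℝ) :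
    riesz w (∑ i ∈ s, f i) = ∑ i ∈ s, riesz w (f i) := by
  classical
  induction s using Finset.induction with
  | empty => simp [riesz_zero]
  | insert _ _ h ih => simp [Finset.sum_insert h, riesz_add, ih]

lemma riesz_sub (p q : MvPolynomial (Fin n) ℝ) :
    riesz w (p - q) = riesz w p - riesz w q := by
  have := riesz_add w (p - q) q
  rw [sub_add_cancel] at this
  linarith

lemma riesz_one : riesz w 1 = w 0 := by
  have : (1 : MvPolynomial (Fin n) ℝ) = monomial 0 1 := by simp
  rw [this, riesz_monomial, one_mul]

/-- cone of nonneg combinations of even monomials of half-degree `d` -/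
noncomputable def evenCone (n d : ℕ) : AddSubmonoid (MvPolynomial (Fin n) ℝ) :=
  AddSubmonoid.closure
    {q | ∃ (c : ℝ) (α : Fin n →₀ ℕ), 0 ≤ c ∧ (∑ j, α j) = d ∧ q = monomial (α + α) c}

lemma single_succ {n : ℕ} (j : Fin n) (α : Fin n →₀ ℕ) :
    (α + α) + Finsupp.single j 2 = (α + Finsupp.single j 1) + (α + Finsupp.single j 1) := by
  have : Finsupp.single j 2 = Finsupp.single j 1 + Finsupp.single j 1 := by
    rw [← Finsupp.single_add]
  rw [this]; abel

lemma mul_S_mem {n d : ℕ} {q : MvPolynomial (Fin n) ℝ} (hq : q ∈ evenCone n d) :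
    (∑ j, X j ^ 2) * q ∈ evenCone n (d + 1) := by
  induction hq using AddSubmonoid.closure_induction with
  | mem x hx =>
    obtain ⟨c, α, hc, hd, rfl⟩ := hx
    rw [Finset.sum_mul]
    refine sum_mem fun j _ => AddSubmonoid.subset_closure ?_
    refine ⟨c, α + Finsupp.single j 1, hc, ?_, ?_⟩
    · simp [Finsupp.add_apply, Finset.sum_add_distrib, hd, Finsupp.single_apply,
        Finset.sum_ite_eq']
    · rw [X_pow_eq_monomial, monomial_mul, one_mul, add_comm (Finsupp.single j 2), single_succ]
  | zero => rw [mul_zero]; exact zero_mem _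
  | add x y hx hy ihx ihy => rw [mul_add]; exact add_mem ihx ihy

lemma Spow_mem {n : ℕ} (t : ℕ) : (∑ j, X j ^ 2) ^ t ∈ evenCone n t := by
  induction t with
  | zero =>
    refine AddSubmonoid.subset_closure ⟨1, 0, zero_le_one, by simp, by simp⟩
  | succ t ih => rw [pow_succ, mul_comm]; exact mul_S_mem ih

section main
variable {k : ℕ} {ρ : ℝ}
  (hM : ∀ p : MvPolynomial (Fin n) ℝ, p.totalDegree ≤ k → 0 ≤ riesz w (p ^ 2))
  (hb : ∀ p : MvPolynomial (Fin n) ℝ, p.totalDegree + 1 ≤ k →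
      0 ≤ riesz w ((C (ρ ^ 2) - ∑ j, X j ^ 2) * p ^ 2))

lemma totalDegree_monomial_le' (α : Fin n →₀ ℕ) (c : ℝ) :
    (monomial α c).totalDegree ≤ ∑ j, α j := by
  classical
  rcases eq_or_ne c 0 with rfl | hc
  · simp
  · rw [totalDegree_monomial _ hc, Finsupp.sum_fintype _ _ (fun _ => rfl)]

lemma monomial_double (α : Fin n →₀ ℕ) (c : ℝ) :
    monomial (α + α) c = c • (monomial α (1:ℝ)) ^ 2 := by
  rw [sq, monomial_mul, smul_monomial]
  norm_num

include hM in
lemma cone_riesz_nonneg {d : ℕ} {q : MvPolynomial (Fin n) ℝ}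
    (hq : q ∈ evenCone n d) (hd : d ≤ k) : 0 ≤ riesz w q := by
  induction hq using AddSubmonoid.closure_induction with
  | mem x hx =>
    obtain ⟨c, α, hc, hdeg, rfl⟩ := hx
    rw [monomial_double, riesz_smul]
    refine mul_nonneg hc (hM _ ?_)
    exact le_trans (totalDegree_monomial_le' α 1) (hdeg ▸ hd)
  | zero => rw [riesz_zero]
  | add x y hx hy ihx ihy => rw [riesz_add]; exact add_nonneg ihx ihy

include hb in
lemma cone_loc_nonneg {d : ℕ} {q : MvPolynomial (Fin n) ℝ}
    (hq : q ∈ evenCone n d) (hd : d + 1 ≤ k) :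
    0 ≤ riesz w ((C (ρ ^ 2) - ∑ j, X j ^ 2) * q) := by
  induction hq using AddSubmonoid.closure_induction with
  | mem x hx =>
    obtain ⟨c, α, hc, hdeg, rfl⟩ := hx
    rw [monomial_double, mul_smul_comm, riesz_smul]
    refine mul_nonneg hc (hb _ ?_)
    have := totalDegree_monomial_le' α (1:ℝ)
    omega
  | zero => rw [mul_zero, riesz_zero]
  | add x y hx hy ihx ihy => rw [mul_add, riesz_add]; exact add_nonneg ihx ihy

end main

lemma sum_image_le' {ι κ : Type*} [DecidableEq κ] (s : Finset ι) (g : ι → κ) (f : κ → ℝ)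
    (hf : ∀ b ∈ s.image g, 0 ≤ f b) : ∑ b ∈ s.image g, f b ≤ ∑ a ∈ s, f (g a) := by
  rw [← Finset.sum_fiberwise_of_maps_to (g := g) (fun a ha => Finset.mem_image_of_mem g ha)]
  refine Finset.sum_le_sum fun b hb => ?_
  obtain ⟨a, ha, rfl⟩ := Finset.mem_image.mp hb
  calc f (g a) = 1 * f (g a) := (one_mul _).symm
    _ ≤ (s.filter (fun x => g x = g a)).card * f (g a) := by
        refine mul_le_mul_of_nonneg_right ?_ (hf _ hb)
        have : a ∈ s.filter (fun x => g x = g a) := Finset.mem_filter.mpr ⟨ha, rfl⟩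
        have := Finset.card_pos.mpr ⟨a, this⟩
        exact_mod_cast this
    _ = ∑ x ∈ s.filter (fun x => g x = g a), f (g x) := by
        rw [Finset.sum_congr rfl (fun x hx => by rw [(Finset.mem_filter.mp hx).2]),
          Finset.sum_const, nsmul_eq_mul]


lemma mem_degLE {n t : ℕ} (α : Fin n →₀ ℕ) : α ∈ degLE n t ↔ ∑ j, α j ≤ t := by
  simp only [degLE, Finset.mem_image, Finset.mem_filter, Fintype.mem_piFinset,
    Finset.mem_range]
  constructor
  · rintro ⟨f, ⟨-, hs⟩, rfl⟩
    simpa using hs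
  · intro h
    refine ⟨⇑α, ⟨fun j => ?_, by simpa using h⟩, by simp⟩
    have : α j ≤ ∑ j, α j := Finset.single_le_sum (fun i _ => Nat.zero_le _) (Finset.mem_univ j)
    omega

noncomputable def Ed (n i : ℕ) : Finset (Fin n →₀ ℕ) :=
  (degLE n i).filter (fun α => ∑ j, α j = i)

lemma mem_Ed {n i : ℕ} (α : Fin n →₀ ℕ) : α ∈ Ed n i ↔ ∑ j, α j = i := by
  simp only [Ed, Finset.mem_filter, mem_degLE]
  omega

lemma deg_single {n : ℕ} (j : Fin n) : (∑ j', Finsupp.single j 1 j') = 1 := by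
  simp [Finsupp.single_apply, Finset.sum_ite_eq']

lemma Ed_zero {n : ℕ} : Ed n 0 = {0} := by
  ext α
  simp only [mem_Ed, Finset.mem_singleton, Finset.sum_eq_zero_iff, Finset.mem_univ, true_implies]
  constructor
  · intro h; ext j; exact h j
  · rintro rfl; simp

lemma Ed_succ_subset {n i : ℕ} :
    Ed n (i + 1) ⊆ ((Ed n i) ×ˢ (Finset.univ : Finset (Fin n))).image
      (fun p => p.1 + Finsupp.single p.2 1) := by
  intro α hα
  rw [mem_Ed] at hα
  have : ∃ j, α j ≠ 0 := by
    by_contra h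
    push_neg at h
    simp [h] at hα
  obtain ⟨j, hj⟩ := this
  have hle : Finsupp.single j 1 ≤ α := by
    rw [Finsupp.single_le_iff]; omega
  obtain ⟨β, rfl⟩ := le_iff_exists_add.mp hle
  refine Finset.mem_image.mpr ⟨(β, j), Finset.mem_product.mpr ⟨?_, Finset.mem_univ j⟩,
    by rw [add_comm]⟩
  rw [mem_Ed]
  simp only [Finsupp.coe_add, Pi.add_apply, Finset.sum_add_distrib, deg_single j] at hα
  show ∑ j', β j' = i
  omega

lemma deg_add {n : ℕ} (β γ : Fin n →₀ ℕ) :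
    (∑ j, (β + γ) j) = (∑ j, β j) + ∑ j, γ j := by
  simp [Finsupp.coe_add, Pi.add_apply, Finset.sum_add_distrib]

lemma exists_le_deg {n : ℕ} (s : ℕ) : ∀ (α : Fin n →₀ ℕ), s ≤ ∑ j, α j →
    ∃ β, β ≤ α ∧ ∑ j, β j = s := by
  induction s with
  | zero => exact fun α _ => ⟨0, zero_le, by simp⟩
  | succ s ih =>
    intro α hs
    obtain ⟨β, hβ, hd⟩ := ih α (by omega)
    have : ∃ j, β j < α j := by
      by_contra h
      push_neg at h
      have : ∑ j, α j ≤ ∑ j, β j := Finset.sum_le_sum fun j _ => h j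
      omega
    obtain ⟨j, hj⟩ := this
    refine ⟨β + Finsupp.single j 1, ?_, ?_⟩
    · intro j'
      rcases eq_or_ne j' j with rfl | hne
      · simp only [Finsupp.coe_add, Pi.add_apply, Finsupp.single_apply, if_true, eq_self_iff_true]
        omega
      · simp only [Finsupp.coe_add, Pi.add_apply, Finsupp.single_apply, if_neg (Ne.symm hne)]
        have := hβ j'
        omega
    · rw [deg_add, hd, deg_single j]

lemma exists_split {n t : ℕ} (α : Fin n →₀ ℕ) :
    ∃ p : (Fin n →₀ ℕ) × (Fin n →₀ ℕ), p.1 + p.2 = α ∧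
      ((∑ j, α j) ≤ 2 * t → (∑ j, p.1 j) ≤ t ∧ (∑ j, p.2 j) ≤ t) := by
  by_cases h : (∑ j, α j) ≤ t
  · exact ⟨(α, 0), by simp, fun _ => ⟨h, by simp⟩⟩
  · push_neg at h
    obtain ⟨β, hβ, hd⟩ := exists_le_deg t α h.le
    obtain ⟨γ, rfl⟩ := le_iff_exists_add.mp hβ
    refine ⟨(β, γ), rfl, fun h2t => ⟨le_of_eq hd, ?_⟩⟩
    rw [deg_add, hd] at h2t
    show (∑ j, γ j) ≤ t
    omega

section main2
variable {n : ℕ} (w : (Fin n →₀ ℕ) → ℝ) {k : ℕ} {ρ : ℝ}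
  (hM : ∀ p : MvPolynomial (Fin n) ℝ, p.totalDegree ≤ k → 0 ≤ riesz w (p ^ 2))
  (hb : ∀ p : MvPolynomial (Fin n) ℝ, p.totalDegree + 1 ≤ k →
      0 ≤ riesz w ((C (ρ ^ 2) - ∑ j, X j ^ 2) * p ^ 2))

include hM in
lemma w0_nonneg : 0 ≤ w 0 := by
  have := hM 1 (by simp)
  rwa [one_pow, riesz_one] at this

include hM in
lemma w2_nonneg {α : Fin n →₀ ℕ} (h : ∑ j, α j ≤ k) : 0 ≤ w (α + α) := by
  have := hM (monomial α 1) (le_trans (totalDegree_monomial_le' α 1) h)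
  rwa [sq, monomial_mul, riesz_monomial, one_mul, one_mul] at this

lemma riesz_C_mul (c : ℝ) (q : MvPolynomial (Fin n) ℝ) :
    riesz w (C c * q) = c * riesz w q := by
  rw [C_mul', riesz_smul]

lemma loc_identity (q : MvPolynomial (Fin n) ℝ) :
    riesz w ((C (ρ ^ 2) - ∑ j, X j ^ 2) * q)
      = ρ ^ 2 * riesz w q - riesz w ((∑ j, X j ^ 2) * q) := by
  rw [sub_mul, riesz_sub, riesz_C_mul]

lemma X_sq_mul (j : Fin n) (α : Fin n →₀ ℕ) (c : ℝ) :
    X j ^ 2 * monomial (α + α) c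
      = monomial ((α + Finsupp.single j 1) + (α + Finsupp.single j 1)) c := by
  rw [X_pow_eq_monomial, monomial_mul, one_mul, add_comm (Finsupp.single j 2), single_succ]

include hM hb in
lemma partA : ∀ t ≤ k, riesz w ((∑ j, X j ^ 2) ^ t) ≤ ρ ^ (2 * t) * w 0 := by
  intro t
  induction t with
  | zero => intro _; simp [riesz_one]
  | succ t ih =>
    intro ht
    have hloc := cone_loc_nonneg w hb (Spow_mem t) (by omega)
    rw [loc_identity] at hloc
    have hS : riesz w ((∑ j, X j ^ 2) * (∑ j, X j ^ 2) ^ t)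
        = riesz w ((∑ j, X j ^ 2) ^ (t + 1)) := by rw [pow_succ, mul_comm]
    have ihe := ih (by omega)
    have hpow : ρ ^ (2 * (t + 1)) = ρ ^ 2 * ρ ^ (2 * t) := by
      rw [show 2 * (t + 1) = 2 + 2 * t by ring, pow_add]
    have := mul_le_mul_of_nonneg_left ihe (sq_nonneg ρ)
    rw [hpow, mul_assoc]
    linarith

include hb in
lemma loc_monomial {β : Fin n →₀ ℕ} (h : (∑ j, β j) + 1 ≤ k) :
    ∑ j, w ((β + Finsupp.single j 1) + (β + Finsupp.single j 1)) ≤ ρ ^ 2 * w (β + β) := by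
  have h0 := hb (monomial β 1) (by have := totalDegree_monomial_le' β (1:ℝ); omega)
  rw [show (monomial β (1:ℝ)) ^ 2 = monomial (β + β) 1 by
      rw [sq, monomial_mul]; norm_num] at h0
  rw [loc_identity, riesz_monomial, Finset.sum_mul] at h0
  have hs : riesz w (∑ j, X j ^ 2 * monomial (β + β) 1)
      = ∑ j, w ((β + Finsupp.single j 1) + (β + Finsupp.single j 1)) := by
    rw [riesz_sum]
    exact Finset.sum_congr rfl fun j _ => by rw [X_sq_mul, riesz_monomial, one_mul]
  rw [hs, one_mul] at h0
  linarith

include hM hb in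
lemma partC_step {i : ℕ} (h : i + 1 ≤ k) :
    ∑ α ∈ Ed n (i + 1), w (α + α) ≤ ρ ^ 2 * ∑ β ∈ Ed n i, w (β + β) := by
  have himg : ∀ b ∈ ((Ed n i) ×ˢ (Finset.univ : Finset (Fin n))).image
      (fun p => p.1 + Finsupp.single p.2 1), 0 ≤ w (b + b) := by
    intro b hbmem
    obtain ⟨p, hp, rfl⟩ := Finset.mem_image.mp hbmem
    have hp1 : p.1 ∈ Ed n i := (Finset.mem_product.mp hp).1
    refine w2_nonneg w hM ?_
    rw [deg_add, deg_single, (mem_Ed p.1).mp hp1]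
    omega
  calc ∑ α ∈ Ed n (i + 1), w (α + α)
      ≤ ∑ b ∈ ((Ed n i) ×ˢ (Finset.univ : Finset (Fin n))).image
          (fun p => p.1 + Finsupp.single p.2 1), w (b + b) :=
        Finset.sum_le_sum_of_subset_of_nonneg Ed_succ_subset (fun b hb' _ => himg b hb')
    _ ≤ ∑ p ∈ (Ed n i) ×ˢ (Finset.univ : Finset (Fin n)),
          w ((p.1 + Finsupp.single p.2 1) + (p.1 + Finsupp.single p.2 1)) :=
        sum_image_le' _ _ _ himg
    _ = ∑ β ∈ Ed n i, ∑ j, w ((β + Finsupp.single j 1) + (β + Finsupp.single j 1)) := by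
        rw [Finset.sum_product]
    _ ≤ ∑ β ∈ Ed n i, ρ ^ 2 * w (β + β) := by
        refine Finset.sum_le_sum fun β hβ => ?_
        exact loc_monomial w hb (by rw [(mem_Ed β).mp hβ]; omega)
    _ = ρ ^ 2 * ∑ β ∈ Ed n i, w (β + β) := (Finset.mul_sum _ _ _).symm

include hM hb in
lemma partC' : ∀ i ≤ k, ∑ α ∈ Ed n i, w (α + α) ≤ ρ ^ (2 * i) * w 0 := by
  intro i
  induction i with
  | zero => intro _; simp [Ed_zero]
  | succ i ih =>
    intro hik
    have h1 := partC_step w hM hb (i := i) (by omega)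
    have h2 := ih (by omega)
    have hpow : ρ ^ (2 * (i + 1)) = ρ ^ 2 * ρ ^ (2 * i) := by
      rw [show 2 * (i + 1) = 2 + 2 * i by ring, pow_add]
    have := mul_le_mul_of_nonneg_left h2 (sq_nonneg ρ)
    rw [hpow, mul_assoc]
    linarith

include hM hb in
lemma partC {t : ℕ} (ht : t ≤ k) :
    ∑ α ∈ degLE n t, w (α + α) ≤ (∑ i ∈ Finset.range (t + 1), ρ ^ (2 * i)) * w 0 := by
  have hmaps : ∀ α ∈ degLE n t, (∑ j, α j) ∈ Finset.range (t + 1) := by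
    intro α hα
    rw [Finset.mem_range]
    have := (mem_degLE α).mp hα
    omega
  rw [← Finset.sum_fiberwise_of_maps_to hmaps, Finset.sum_mul]
  refine Finset.sum_le_sum fun i hi => ?_
  rw [Finset.mem_range] at hi
  have hfib : (degLE n t).filter (fun α => (∑ j, α j) = i) = Ed n i := by
    ext α
    rw [Finset.mem_filter, mem_degLE, mem_Ed]
    omega
  rw [hfib]
  exact partC' w hM hb i (by omega)

include hM in
lemma cs_ineq {β γ : Fin n →₀ ℕ} (hβ : ∑ j, β j ≤ k) (hγ : ∑ j, γ j ≤ k) :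
    w (β + γ) ^ 2 ≤ w (β + β) * w (γ + γ) := by
  have hx : ∀ x : ℝ, 0 ≤ w (β + β) * (x * x) + (2 * w (β + γ)) * x + w (γ + γ) := by
    intro x
    have hdeg : (monomial β x + monomial γ 1).totalDegree ≤ k := by
      refine le_trans (totalDegree_add _ _) (max_le ?_ ?_)
      · exact le_trans (totalDegree_monomial_le' β x) hβ
      · exact le_trans (totalDegree_monomial_le' γ 1) hγ
    have h0 := hM _ hdeg
    have hp2 : (monomial β x + monomial γ 1) ^ 2
        = monomial (β + β) (x * x) + (monomial (β + γ) (x * 1) + monomial (β + γ) (x * 1))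
          + monomial (γ + γ) (1 * 1) := by
      rw [add_sq, sq, monomial_mul, sq, monomial_mul, mul_assoc, monomial_mul, two_mul]
    rw [hp2] at h0
    simp only [riesz_add, riesz_monomial] at h0
    linarith
  have hd := discrim_le_zero hx
  rw [discrim] at hd
  nlinarith [hd]

include hM in
lemma partB {t : ℕ} (ht : t ≤ k) :
    Real.sqrt (∑ α ∈ degLE n (2 * t), (w α) ^ 2) ≤ ∑ α ∈ degLE n t, w (α + α) := by
  set T := ∑ α ∈ degLE n t, w (α + α) with hT
  have hT0 : 0 ≤ T := by
    refine Finset.sum_nonneg fun α hα => ?_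
    exact w2_nonneg w hM (le_trans ((mem_degLE α).mp hα) ht)
  have key : (∑ α ∈ degLE n (2 * t), (w α) ^ 2) ≤ T ^ 2 := by
    choose g hg1 hg2 using fun α : Fin n →₀ ℕ => exists_split (t := t) α
    have step1 : ∑ α ∈ degLE n (2 * t), (w α) ^ 2
        = ∑ α ∈ degLE n (2 * t), (w ((g α).1 + (g α).2)) ^ 2 :=
      Finset.sum_congr rfl fun α _ => by rw [hg1]
    have hinj : ∀ a ∈ degLE n (2 * t), ∀ b ∈ degLE n (2 * t), g a = g b → a = b := by
      intro a _ b _ hab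
      rw [← hg1 a, ← hg1 b, hab]
    have step2 : ∑ α ∈ degLE n (2 * t), (w ((g α).1 + (g α).2)) ^ 2
        = ∑ p ∈ (degLE n (2 * t)).image g, (w (p.1 + p.2)) ^ 2 :=
      (Finset.sum_image (f := fun p : (Fin n →₀ ℕ) × (Fin n →₀ ℕ) => (w (p.1 + p.2)) ^ 2)
        hinj).symm
    have step3 : ∑ p ∈ (degLE n (2 * t)).image g, (w (p.1 + p.2)) ^ 2
        ≤ ∑ p ∈ (degLE n t) ×ˢ (degLE n t), (w (p.1 + p.2)) ^ 2 := by
      refine Finset.sum_le_sum_of_subset_of_nonneg ?_ (fun p _ _ => sq_nonneg _)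
      intro p hp
      obtain ⟨α, hα, rfl⟩ := Finset.mem_image.mp hp
      have := hg2 α ((mem_degLE α).mp hα)
      exact Finset.mem_product.mpr ⟨(mem_degLE _).mpr this.1, (mem_degLE _).mpr this.2⟩
    have step4 : ∑ p ∈ (degLE n t) ×ˢ (degLE n t), (w (p.1 + p.2)) ^ 2 ≤ T ^ 2 := by
      have : ∑ p ∈ (degLE n t) ×ˢ (degLE n t), (w (p.1 + p.2)) ^ 2
          ≤ ∑ p ∈ (degLE n t) ×ˢ (degLE n t), w (p.1 + p.1) * w (p.2 + p.2) := by
        refine Finset.sum_le_sum fun p hp => ?_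
        have hp' := Finset.mem_product.mp hp
        exact cs_ineq w hM (le_trans ((mem_degLE _).mp hp'.1) ht)
          (le_trans ((mem_degLE _).mp hp'.2) ht)
      refine le_trans this (le_of_eq ?_)
      rw [sq, hT, Finset.sum_mul_sum]
      rw [← Finset.sum_product']
    calc ∑ α ∈ degLE n (2 * t), (w α) ^ 2 = _ := step1
      _ = _ := step2
      _ ≤ _ := step3
      _ ≤ T ^ 2 := step4
  calc Real.sqrt (∑ α ∈ degLE n (2 * t), (w α) ^ 2) ≤ Real.sqrt (T ^ 2) :=
        Real.sqrt_le_sqrt key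
    _ = T := by rw [Real.sqrt_sq hT0]

end main2

end aux

/-- If `M_k(w) ⪰ 0` and `L^{(k)}_b(w) ⪰ 0` with `b = ρ² - ‖x‖²`,
then for each `t ≤ k`: `L_w(‖x‖^{2t}) ≤ ρ^{2t} w_0`, and
`‖w|_{2t}‖₂ ≤ Tr(M_t(w)) ≤ (1 + ρ² + ⋯ + ρ^{2t}) w_0`,
where `Tr(M_t(w)) = ∑_{|α| ≤ t} w_{2α}`. -/
theorem moment_bounds_from_ball_localizing
    (n k : ℕ) (ρ : ℝ) (hρ : 0 < ρ) (w : (Fin n →₀ ℕ) → ℝ)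
    (hM : ∀ p : MvPolynomial (Fin n) ℝ, p.totalDegree ≤ k → 0 ≤ riesz w (p ^ 2))
    (hb : ∀ p : MvPolynomial (Fin n) ℝ, p.totalDegree + 1 ≤ k →
      0 ≤ riesz w ((C (ρ ^ 2) - ∑ j, X j ^ 2) * p ^ 2)) :
    ∀ t ≤ k,
      riesz w ((∑ j, X j ^ 2) ^ t) ≤ ρ ^ (2 * t) * w 0 ∧
      Real.sqrt (∑ α ∈ degLE n (2 * t), (w α) ^ 2) ≤ ∑ α ∈ degLE n t, w (α + α) ∧
      ∑ α ∈ degLE n t, w (α + α) ≤ (∑ i ∈ Finset.range (t + 1), ρ ^ (2 * i)) * w 0 := by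
  intro t ht
  exact ⟨partA w hM hb t ht, partB w hM ht, partC w hM hb ht⟩
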